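/- Let U be a 2×2 complex unitary matrix and a, b, c, d real numbers with a + d = b + c, and set H = (U ⊗ₖ U) * diag₄(a,b,c,d) * (U ⊗ₖ U)ᴴ. Then for every t ∈ ℝ there exist 2×2 unitary matrices V and W such that exp(i·t·H) = V ⊗ₖ W, i.e. the time evolution of H never creates entanglement. -/

import Mathlib

open Matrix Kronecker

/-- `diag₄ (a,b,c,d)`. -/
noncomputable def diag4 (a b c d : ℂ) : Matrix (Fin 2 × Fin 2) (Fin 2 × Fin 2) ℂ :=
  Matrix.diagonal (fun p => !![a, b; c, d] p.1 p.2)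

lemma kron_conjT (A B : Matrix (Fin 2) (Fin 2) ℂ) : (A ⊗ₖ B)ᴴ = Aᴴ ⊗ₖ Bᴴ := by
  ext ⟨i,j⟩ ⟨k,l⟩
  simp [conjTranspose_apply, kroneckerMap_apply]

lemma diag_unitary (v : Fin 2 → ℂ) (hv : ∀ i, v i * star (v i) = 1) :
    Matrix.diagonal v ∈ Matrix.unitaryGroup (Fin 2) ℂ := by
  rw [Matrix.mem_unitaryGroup_iff, star_eq_conjTranspose, diagonal_conjTranspose,
    diagonal_mul_diagonal]
  simp only [Pi.mul_apply, Pi.star_apply]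
  rw [show (fun i => v i * star (v i)) = fun _ => (1:ℂ) from funext hv]
  exact Matrix.diagonal_one

lemma expu (s : ℂ) (hs : (starRingEnd ℂ) s = -s) :
    Complex.exp s * (starRingEnd ℂ) (Complex.exp s) = 1 := by
  rw [← Complex.exp_conj, ← Complex.exp_add, hs, add_neg_cancel, Complex.exp_zero]

/-- If `a + d = b + c` then the time evolution of the locally diagonalizable
Hamiltonian `H = (U⊗U) diag₄(a,b,c,d) (U⊗U)ᴴ` never creates entanglement:
`exp(itH)` is a tensor product of two unitaries. -/
theorem stmt_5 (U : Matrix (Fin 2) (Fin 2) ℂ) (hU : U ∈ Matrix.unitaryGroup (Fin 2) ℂ)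
    (a b c d : ℝ) (habcd : a + d = b + c)
    (H : Matrix (Fin 2 × Fin 2) (Fin 2 × Fin 2) ℂ)
    (hH : H = (U ⊗ₖ U) * diag4 (a : ℂ) (b : ℂ) (c : ℂ) (d : ℂ) * (U ⊗ₖ U)ᴴ) :
    ∀ t : ℝ, ∃ V W : Matrix (Fin 2) (Fin 2) ℂ,
      V ∈ Matrix.unitaryGroup (Fin 2) ℂ ∧ W ∈ Matrix.unitaryGroup (Fin 2) ℂ ∧
      NormedSpace.exp (Complex.I • (t : ℂ) • H) = V ⊗ₖ W := by
  intro t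
  have hUU : (U ⊗ₖ U) ∈ Matrix.unitaryGroup (Fin 2 × Fin 2) ℂ := by
    rw [Matrix.mem_unitaryGroup_iff, star_eq_conjTranspose, kron_conjT,
      ← Matrix.mul_kronecker_mul,
      show U * Uᴴ = 1 from Matrix.mem_unitaryGroup_iff.mp hU,
      Matrix.one_kronecker_one]
  have hPunit : IsUnit (U ⊗ₖ U) :=
    ⟨⟨U ⊗ₖ U, star (U ⊗ₖ U), Matrix.mem_unitaryGroup_iff.mp hUU,
      Matrix.mem_unitaryGroup_iff'.mp hUU⟩, rfl⟩
  have hinv : (U ⊗ₖ U)⁻¹ = (U ⊗ₖ U)ᴴ :=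
    Matrix.inv_eq_right_inv (Matrix.mem_unitaryGroup_iff.mp hUU)
  set A : Matrix (Fin 2) (Fin 2) ℂ :=
    Matrix.diagonal ![1, Complex.exp (Complex.I * t * ((c:ℂ) - a))] with hA
  set B : Matrix (Fin 2) (Fin 2) ℂ :=
    Matrix.diagonal ![Complex.exp (Complex.I * t * a), Complex.exp (Complex.I * t * b)] with hB
  have hconj : ∀ r : ℝ, (starRingEnd ℂ) (Complex.I * t * r) = -(Complex.I * t * r) := by
    intro r; simp [Complex.conj_ofReal]
  have hAu : A ∈ Matrix.unitaryGroup (Fin 2) ℂ := by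
    apply diag_unitary; intro i; fin_cases i
    · simp
    · show Complex.exp _ * star (Complex.exp _) = 1
      rw [show ((c:ℂ) - a) = ((c - a : ℝ) : ℂ) by push_cast; ring]
      exact expu _ (hconj (c - a))
  have hBu : B ∈ Matrix.unitaryGroup (Fin 2) ℂ := by
    apply diag_unitary; intro i; fin_cases i
    · exact expu _ (hconj a)
    · exact expu _ (hconj b)
  -- exp of the diagonal part
  have hdiag : NormedSpace.exp
      (Complex.I • (t:ℂ) • diag4 (a:ℂ) (b:ℂ) (c:ℂ) (d:ℂ)) = A ⊗ₖ B := by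
    rw [diag4, ← Matrix.diagonal_smul, ← Matrix.diagonal_smul, Matrix.exp_diagonal,
      hA, hB, Matrix.diagonal_kronecker_diagonal]
    apply congrArg Matrix.diagonal
    funext p
    have hd : (d:ℂ) = (b:ℂ) + c - a := by
      have : (a:ℂ) + d = b + c := by exact_mod_cast congrArg Complex.ofReal habcd
      linear_combination this
    fin_cases p <;>
      simp [Pi.exp_def, Pi.smul_apply, smul_eq_mul, ← Complex.exp_eq_exp_ℂ,
        ← Complex.exp_add, hd] <;>
      ring_nf
  refine ⟨U * A * Uᴴ, U * B * Uᴴ, ?_, ?_, ?_⟩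
  · exact mul_mem (mul_mem hU hAu) (Matrix.star_eq_conjTranspose U ▸ Unitary.star_mem hU)
  · exact mul_mem (mul_mem hU hBu) (Matrix.star_eq_conjTranspose U ▸ Unitary.star_mem hU)
  · have hsm : Complex.I • (t:ℂ) • H =
        (U ⊗ₖ U) * (Complex.I • (t:ℂ) • diag4 (a:ℂ) (b:ℂ) (c:ℂ) (d:ℂ)) * (U ⊗ₖ U)⁻¹ := by
      rw [hinv, hH, Matrix.mul_smul, Matrix.mul_smul, Matrix.smul_mul, Matrix.smul_mul]
    rw [hsm, Matrix.exp_conj _ _ hPunit, hdiag, hinv, kron_conjT,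
      ← Matrix.mul_kronecker_mul, ← Matrix.mul_kronecker_mul]
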